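/- Let q, r, the torus action with weights a : Fin (q+1) → (Fin r → ℤ), the moment map μ, the all-ones vector 𝟙, and the affine cone W̃ = closure{ c • (t • 𝟙) : c ∈ ℂˣ, t ∈ T } be as in the context. Let S be the additive submonoid of ℤ × (Fin r → ℤ) generated by the elements (1, a j) for j ∈ Fin (q+1). Then a point x ∈ (Fin r → ℝ) all of whose coordinates are rational lies in μ(W̃ \ {0}) if and only if there exist n > 0 and b : Fin r → ℤ with (n, b) ∈ S and x i = (b i : ℝ) / n for every i. (This is the statement μ(W) ∩ ℚ^r = Δ_ℚ(S) of the convexity proposition.) -/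

import Mathlib

open Finset

theorem mem_closure_range_iff_comb {M : Type*} [AddCommMonoid M] {p : ℕ} (f : Fin p → M) (x : M) :
    x ∈ AddSubmonoid.closure (Set.range f) ↔ ∃ m : Fin p → ℕ, x = ∑ j, m j • f j := by
  constructor
  · intro hx
    induction hx using AddSubmonoid.closure_induction with
    | mem y hy =>
      obtain ⟨j, rfl⟩ := hy
      exact ⟨fun k => if k = j then 1 else 0, by simp [Finset.sum_ite_eq']⟩
    | zero => exact ⟨0, by simp⟩
    | add y z _ _ hy hz =>
      obtain ⟨m1, rfl⟩ := hy; obtain ⟨m2, rfl⟩ := hz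
      exact ⟨m1 + m2, by simp [add_smul, Finset.sum_add_distrib]⟩
  · rintro ⟨m, rfl⟩
    refine AddSubmonoid.sum_mem _ (fun j _ => AddSubmonoid.nsmul_mem _ ?_ _)
    exact AddSubmonoid.subset_closure (Set.mem_range_self j)

theorem rat_sol_aux {ι P : Type*} [Fintype ι] [Fintype P] [DecidableEq P]
    (B : P → ι → ℚ) (X : ι → ℚ) :
    ∀ n : ℕ, ∀ w : P → ℝ, (univ.filter (fun j => w j ≠ 0)).card ≤ n →
    (∀ j, 0 ≤ w j) → (∀ i, (X i : ℝ) = ∑ j, w j * (B j i : ℝ)) →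
    ∃ u : P → ℚ, (∀ j, 0 ≤ u j) ∧ ∀ i, X i = ∑ j, u j * B j i := by
  classical
  intro n
  induction n with
  | zero =>
    intro w hcard hw hX
    have hzero : ∀ j, w j = 0 := by
      intro j
      by_contra h
      have : (univ.filter (fun j => w j ≠ 0)).Nonempty := ⟨j, by simp [h]⟩
      have := Finset.card_pos.2 this
      omega
    refine ⟨0, fun j => le_refl 0, fun i => ?_⟩
    have := hX i
    simp [hzero] at this
    have hx0 : X i = 0 := by exact_mod_cast (by simpa using this : (X i : ℝ) = ((0:ℚ) : ℝ))
    simp [hx0]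
  | succ n ih =>
    intro w hcard hw hX
    set s : Finset P := univ.filter (fun j => w j ≠ 0) with hs
    have hwmem : ∀ j : ↥s, 0 < w j := by
      rintro ⟨j, hj⟩
      rcases (hw j).lt_or_eq with h | h
      · exact h
      · exfalso; rw [hs] at hj; simp at hj; exact hj h.symm
    -- sum over s equals total sum
    have hsum : ∀ (f : P → ℝ), (∑ j, w j * f j) = ∑ j ∈ s, w j * f j := by
      intro f
      rw [← Finset.sum_subset (Finset.subset_univ s)]
      intro j _ hj
      rw [hs] at hj; simp at hj; rw [hj]; ring
    by_cases hindep : LinearIndependent ℝ (fun j : ↥s => fun i => (B j i : ℝ))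
    · -- Gram matrix argument
      set G : Matrix ↥s ↥s ℚ := fun j k => ∑ i, B j i * B k i with hG
      set GR : Matrix ↥s ↥s ℝ := G.map (Rat.cast) with hGR
      have hinj : ∀ c : ↥s → ℝ, GR.mulVec c = 0 → c = 0 := by
        intro c hc
        have key : ∀ i, (∑ j : ↥s, c j * (B j i : ℝ)) = 0 := by
          have h2 : ∑ j : ↥s, c j * (GR.mulVec c j) = 0 := by
            rw [hc]; simp
          have l1 : ∀ i, (∑ j : ↥s, c j * (B j i : ℝ))^2
              = ∑ j : ↥s, ∑ k : ↥s, (c j * (B j i:ℝ)) * (c k * (B k i:ℝ)) := by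
            intro i; rw [sq, Finset.sum_mul_sum]
          have h3 : (∑ i, (∑ j : ↥s, c j * (B j i : ℝ))^2) = 0 := by
            rw [← h2]
            simp only [Matrix.mulVec, dotProduct, hGR, hG, Matrix.map_apply, Matrix.map, Matrix.of_apply,
              Rat.cast_sum, Rat.cast_mul, l1, Finset.mul_sum]
            rw [Finset.sum_comm]
            congr 1; ext j
            rw [Finset.sum_comm]
            congr 1; ext k
            simp only [Finset.sum_mul, Finset.mul_sum]
            congr 1; ext i
            ring
          intro i
          have := Finset.sum_eq_zero_iff_of_nonneg (fun i _ => sq_nonneg _) |>.1 h3 i (Finset.mem_univ i)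
          exact pow_eq_zero_iff (n := 2) (by norm_num) |>.1 this
        have := linearIndependent_iff'.1 hindep Finset.univ c ?_
        · ext j; exact this j (Finset.mem_univ j)
        · ext i
          simp only [Finset.sum_apply, Pi.smul_apply, smul_eq_mul, Pi.zero_apply]
          exact key i
      have hdetR : GR.det ≠ 0 := by
        intro h
        obtain ⟨v, hv, hv0⟩ := (Matrix.exists_mulVec_eq_zero_iff).2 h
        exact hv (hinj v hv0)
      have hdet : G.det ≠ 0 := by
        intro h
        apply hdetR
        rw [hGR, show G.map (Rat.cast : ℚ → ℝ) = (Rat.castHom ℝ).mapMatrix G from rfl,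
          ← RingHom.map_det, h]
        simp
      have : Invertible G := G.invertibleOfIsUnitDet (isUnit_iff_ne_zero.2 hdet)
      set y : ↥s → ℚ := fun j => ∑ i, B j i * X i with hy
      set u' : ↥s → ℚ := (⅟G).mulVec y with hu'
      have hGu' : G.mulVec u' = y := by
        rw [hu', Matrix.mulVec_mulVec, mul_invOf_self, Matrix.one_mulVec]
      -- real: GR.mulVec (w ∘ coe) = yR
      have hGw : GR.mulVec (fun j : ↥s => w j) = fun j => (y j : ℝ) := by
        ext j
        simp only [Matrix.mulVec, dotProduct, hGR, hG, hy, Matrix.map_apply, Matrix.map, Matrix.of_apply]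
        push_cast
        calc ∑ k : ↥s, (∑ i, (B j i :ℝ) * B k i) * w k
            = ∑ k : ↥s, ∑ i, ((B j i :ℝ) * B k i) * w k := by
              congr 1; ext k; rw [Finset.sum_mul]
          _ = ∑ i, ∑ k : ↥s, ((B j i :ℝ) * B k i) * w k := Finset.sum_comm
          _ = ∑ i, (B j i : ℝ) * ∑ k : ↥s, w k * (B k i : ℝ) := by
              congr 1; ext i
              rw [Finset.mul_sum]; congr 1; ext k; ring
          _ = ∑ i, (B j i : ℝ) * (X i : ℝ) := by
              congr 1; ext i
              rw [hX i, hsum (fun j => (B j i : ℝ)), ← Finset.sum_coe_sort s (fun j => w j * (B j i : ℝ))]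
      have hGu'R : GR.mulVec (fun j => (u' j : ℝ)) = fun j => (y j : ℝ) := by
        ext j
        have := congrFun hGu' j
        simp only [Matrix.mulVec, dotProduct] at this ⊢
        simp only [hGR, Matrix.map_apply]
        exact_mod_cast congrArg (Rat.cast : ℚ → ℝ) this
      have hweq : (fun j : ↥s => w j) = fun j => (u' j : ℝ) := by
        have h0 : GR.mulVec ((fun j : ↥s => w j) - fun j => (u' j : ℝ)) = 0 := by
          rw [Matrix.mulVec_sub, hGw, hGu'R]; simp
        have := hinj _ h0
        ext j
        have := congrFun this j
        simp at this
        linarith [this]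
      refine ⟨fun j => if h : j ∈ s then u' ⟨j, h⟩ else 0, ?_, ?_⟩
      · intro j
        by_cases h : j ∈ s
        · simp only [h, dif_pos]
          have : (0:ℝ) ≤ (u' ⟨j,h⟩ : ℝ) := by
            rw [← congrFun hweq ⟨j,h⟩]; exact hw j
          exact_mod_cast this
        · simp [h]
      · intro i
        have hcast : ∀ j, ((if h : j ∈ s then u' ⟨j,h⟩ else 0 : ℚ) : ℝ)
            = if h : j ∈ s then (u' ⟨j,h⟩ : ℝ) else 0 := by intro j; split <;> simp
        have : (X i : ℝ) = ((∑ j, (if h : j ∈ s then u' ⟨j, h⟩ else 0) * B j i : ℚ) : ℝ) := by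
          rw [Rat.cast_sum]
          simp only [Rat.cast_mul, hcast]
          rw [hX i, hsum (fun j => (B j i : ℝ))]
          rw [← Finset.sum_coe_sort s (fun j => w j * (B j i : ℝ))]
          rw [show (∑ j, (if h : j ∈ s then (u' ⟨j, h⟩:ℝ) else 0) * (B j i:ℝ)) =
            ∑ j ∈ s, (if h : j ∈ s then (u' ⟨j, h⟩:ℝ) else 0) * (B j i:ℝ) from
            (Finset.sum_subset (Finset.subset_univ s) (by intro j _ hj; simp [hj])).symm]
          rw [← Finset.sum_coe_sort s (fun j => (if h : j ∈ s then (u' ⟨j, h⟩:ℝ) else 0) * (B j i:ℝ))]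
          congr 1; ext j
          rw [congrFun hweq j]
          simp [j.2]
        exact_mod_cast this
    · -- dependent case: reduce support
      obtain ⟨g0, hg0sum, j1, hj1⟩ := Fintype.not_linearIndependent_iff.1 hindep
      obtain ⟨g, hgsum, j2, hj2⟩ : ∃ g : ↥s → ℝ,
          (∑ j : ↥s, g j • (fun i => (B (↑j) i : ℝ))) = 0 ∧ ∃ j, 0 < g j := by
        rcases lt_or_gt_of_ne hj1 with h | h
        · exact ⟨-g0, by simpa [neg_smul] using congrArg Neg.neg hg0sum, j1, by simpa using h⟩
        · exact ⟨g0, hg0sum, j1, h⟩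
      have hg_i : ∀ i, (∑ j : ↥s, g j * (B (↑j) i : ℝ)) = 0 := by
        intro i
        have := congrFun hgsum i
        simpa [Finset.sum_apply] using this
      have hTne : (univ.filter (fun j : ↥s => 0 < g j)).Nonempty := ⟨j2, by simp [hj2]⟩
      obtain ⟨j0, hj0mem, hj0min⟩ :=
        Finset.exists_min_image _ (fun j : ↥s => w ↑j / g j) hTne
      have hgj0 : 0 < g j0 := (Finset.mem_filter.1 hj0mem).2
      set t : ℝ := w ↑j0 / g j0 with htdef
      have ht : 0 < t := div_pos (hwmem j0) hgj0
      set w' : P → ℝ := fun j => if h : j ∈ s then w j - t * g ⟨j, h⟩ else 0 with hw'def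
      have hw' : ∀ j, 0 ≤ w' j := by
        intro j
        by_cases h : j ∈ s
        · simp only [hw'def, h, dif_pos]
          rcases le_or_gt (g ⟨j, h⟩) 0 with hg | hg
          · nlinarith [hw j]
          · have hmem : (⟨j, h⟩ : ↥s) ∈ univ.filter (fun j : ↥s => 0 < g j) := by simp [hg]
            have := hj0min _ hmem
            rw [div_le_div_iff₀ hgj0 hg] at this
            have h2 : t * g ⟨j, h⟩ ≤ w j := by
              rw [htdef, div_mul_eq_mul_div, div_le_iff₀ hgj0]
              linarith [this]
            linarith
        · simp [hw'def, h]
      have hw'j0 : w' ↑j0 = 0 := by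
        have : (⟨(↑j0 : P), j0.2⟩ : ↥s) = j0 := Subtype.coe_eta _ _
        simp only [hw'def, j0.2, dif_pos, this, htdef]
        field_simp
        ring
      have hsub : univ.filter (fun j => w' j ≠ 0) ⊆ s.erase ↑j0 := by
        intro j hj
        simp only [Finset.mem_filter, Finset.mem_univ, true_and] at hj
        rw [Finset.mem_erase]
        constructor
        · intro h; exact hj (h ▸ hw'j0)
        · by_contra h
          exact hj (by simp [hw'def, h])
      have hcard' : (univ.filter (fun j => w' j ≠ 0)).card ≤ n := by
        have h1 := Finset.card_le_card hsub
        have h2 := Finset.card_erase_of_mem j0.2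
        have h3 : 0 < s.card := Finset.card_pos.2 ⟨↑j0, j0.2⟩
        omega
      refine ih w' hcard' hw' ?_
      intro i
      rw [hX i, hsum (fun j => (B j i : ℝ))]
      have : (∑ j, w' j * (B j i : ℝ)) = ∑ j ∈ s, w' j * (B j i : ℝ) := by
        apply (Finset.sum_subset (Finset.subset_univ s) _).symm
        intro j _ hj
        simp [hw'def, hj]
      rw [this, ← Finset.sum_coe_sort s (fun j => w j * (B j i : ℝ)),
        ← Finset.sum_coe_sort s (fun j => w' j * (B j i : ℝ))]
      have expand : ∀ j : ↥s, w' ↑j * (B (↑j) i : ℝ)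
          = w ↑j * (B (↑j) i : ℝ) - t * (g j * (B (↑j) i : ℝ)) := by
        rintro ⟨j, hj⟩
        simp only [hw'def, hj, dif_pos]
        ring
      rw [Finset.sum_congr rfl (fun j _ => expand j), Finset.sum_sub_distrib,
        ← Finset.mul_sum, hg_i i]
      ring

theorem hasDerivAt_expsum {ι : Type*} (J : Finset ι) (C D : ι → ℝ) :
    HasDerivAt (fun ε : ℝ => ∑ j ∈ J, Real.exp (C j + ε * D j))
      (∑ j ∈ J, Real.exp (C j) * D j) 0 := by
  have h : ∀ j ∈ J, HasDerivAt (fun ε : ℝ => Real.exp (C j + ε * D j))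
      (Real.exp (C j) * D j) 0 := by
    intro j _
    have h1 : HasDerivAt (fun ε : ℝ => C j + ε * D j) (D j) 0 := by
      simpa using (((hasDerivAt_id (0:ℝ)).mul_const (D j)).const_add (C j))
    simpa using h1.exp
  simpa using HasDerivAt.fun_sum h

theorem dot_self_zero {r : ℕ} (u : Fin r → ℝ) (h : (∑ i, u i * u i) = 0) : u = 0 := by
  funext i
  have h1 : ∀ i ∈ univ, 0 ≤ u i * u i := fun i _ => mul_self_nonneg _
  have := (Finset.sum_eq_zero_iff_of_nonneg h1).1 h i (mem_univ i)
  simpa [mul_self_eq_zero] using this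

theorem exists_exp_critical {r p : ℕ} (b : Fin p → Fin r → ℝ) (J : Finset (Fin p))
    (hrelint : ∀ v : Fin r → ℝ, (∀ j ∈ J, 0 ≤ ∑ i, b j i * v i) →
      ∀ j ∈ J, (∑ i, b j i * v i) = 0) :
    ∃ s : Fin r → ℝ, ∀ i, (∑ j ∈ J, Real.exp (∑ i', b j i' * s i') * b j i) = 0 := by
  classical
  by_cases hbz : ∀ j ∈ J, b j = 0
  · exact ⟨0, fun i => Finset.sum_eq_zero fun j hj => by rw [hbz j hj]; simp⟩
  push_neg at hbz
  obtain ⟨j₀, hj₀J, hj₀⟩ := hbz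
  set V : Submodule ℝ (Fin r → ℝ) := Submodule.span ℝ (b '' ↑J) with hV
  have hbV : ∀ j ∈ J, b j ∈ V := fun j hj => Submodule.subset_span ⟨j, hj, rfl⟩
  -- if u ∈ V is orthogonal to all b j (j ∈ J) then u = 0
  have hperp : ∀ u : Fin r → ℝ, u ∈ V → (∀ j ∈ J, (∑ i, b j i * u i) = 0) → u = 0 := by
    intro u hu hp
    have key : ∀ z ∈ V, (∑ i, z i * u i) = 0 := by
      intro z hz
      induction hz using Submodule.span_induction with
      | mem z hzm => obtain ⟨j, hj, rfl⟩ := hzm; exact hp j hj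
      | zero => simp
      | add y z _ _ hy hz => simp [add_mul, Finset.sum_add_distrib, hy, hz]
      | smul c z _ hz =>
        simp only [Pi.smul_apply, smul_eq_mul, mul_assoc, ← Finset.mul_sum, hz, mul_zero]
    exact dot_self_zero u (key u hu)
  -- the positive-part functional
  set φ : (↥V) → ℝ := fun u => ∑ j ∈ J, max (∑ i, b j i * (u : Fin r → ℝ) i) 0 with hφ
  have hφnonneg : ∀ u, 0 ≤ φ u :=
    fun u => Finset.sum_nonneg fun j _ => le_max_right _ _
  have hdotcont : ∀ j : Fin p, Continuous fun u : ↥V => ∑ i, b j i * (u : Fin r → ℝ) i := by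
    intro j
    exact continuous_finset_sum _ fun i _ =>
      (continuous_const.mul ((continuous_apply i).comp continuous_subtype_val))
  have hφcont : Continuous φ :=
    continuous_finset_sum _ fun j _ => (hdotcont j).max continuous_const
  have hφpos : ∀ u : ↥V, u ≠ 0 → 0 < φ u := by
    intro u hu
    rcases (hφnonneg u).lt_or_eq with h | h
    · exact h
    exfalso
    have hall : ∀ j ∈ J, max (∑ i, b j i * (u : Fin r → ℝ) i) 0 = 0 := by
      intro j hj
      have h1 : ∀ j ∈ J, (0:ℝ) ≤ max (∑ i, b j i * (u : Fin r → ℝ) i) 0 :=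
        fun j _ => le_max_right _ _
      exact (Finset.sum_eq_zero_iff_of_nonneg h1).1 h.symm j hj
    have hle : ∀ j ∈ J, (∑ i, b j i * (u : Fin r → ℝ) i) ≤ 0 := by
      intro j hj
      by_contra hgt
      push_neg at hgt
      have := hall j hj
      rw [max_eq_left hgt.le] at this
      exact hgt.ne' this
    have h0 : ∀ j ∈ J, (∑ i, b j i * (-(u : Fin r → ℝ)) i) = 0 := by
      apply hrelint
      intro j hj
      have := hle j hj
      simp only [Pi.neg_apply, mul_neg, Finset.sum_neg_distrib]
      linarith
    have h0' : ∀ j ∈ J, (∑ i, b j i * (u : Fin r → ℝ) i) = 0 := by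
      intro j hj
      have := h0 j hj
      simp only [Pi.neg_apply, mul_neg, Finset.sum_neg_distrib] at this
      linarith
    exact hu (Subtype.ext (hperp _ u.2 h0'))
  -- φ is positively homogeneous
  have hφhom : ∀ (c : ℝ), 0 ≤ c → ∀ u : ↥V, φ (c • u) = c * φ u := by
    intro c hc u
    rw [hφ, Finset.mul_sum]
    refine Finset.sum_congr rfl fun j _ => ?_
    have : (∑ i, b j i * ((c • u : ↥V) : Fin r → ℝ) i) = c * ∑ i, b j i * (u : Fin r → ℝ) i := by
      rw [Finset.mul_sum]
      refine Finset.sum_congr rfl fun i _ => ?_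
      have : ((c • u : ↥V) : Fin r → ℝ) i = c * (u : Fin r → ℝ) i := rfl
      rw [this]; ring
    rw [this, mul_max_of_nonneg _ _ hc, mul_zero]
  -- sphere and the coercivity constant
  have hsphne : (Metric.sphere (0:↥V) 1).Nonempty := by
    have hbmem : b j₀ ∈ V := hbV j₀ hj₀J
    have hnorm : ‖b j₀‖ ≠ 0 := norm_ne_zero_iff.2 hj₀
    refine ⟨(‖b j₀‖)⁻¹ • ⟨b j₀, hbmem⟩, ?_⟩
    rw [Metric.mem_sphere, dist_zero_right]
    have h1 : ‖((‖b j₀‖)⁻¹ • ⟨b j₀, hbmem⟩ : ↥V)‖ = ‖(‖b j₀‖)⁻¹ • b j₀‖ := rfl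
    rw [h1, norm_smul, norm_inv, norm_norm]
    field_simp
  obtain ⟨u₁, hu₁mem, hu₁min⟩ :=
    (isCompact_sphere (0:↥V) 1).exists_isMinOn hsphne hφcont.continuousOn
  set ε : ℝ := φ u₁ with hε
  have hu₁ne : u₁ ≠ 0 := by
    intro h
    rw [h] at hu₁mem
    simp at hu₁mem
  have hεpos : 0 < ε := hφpos u₁ hu₁ne
  have hcoer : ∀ u : ↥V, ε * ‖u‖ ≤ φ u := by
    intro u
    by_cases hu : u = 0
    · rw [hu]
      simp only [norm_zero, mul_zero]
      exact hφnonneg 0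
    · have hn : (0:ℝ) < ‖u‖ := norm_pos_iff.2 hu
      have hmem : (‖u‖⁻¹ • u) ∈ Metric.sphere (0:↥V) 1 := by
        rw [Metric.mem_sphere, dist_zero_right]
        have h1 : ‖((‖u‖)⁻¹ • u : ↥V)‖ = ‖(‖u‖)⁻¹ • (u : Fin r → ℝ)‖ := rfl
        have h2 : ‖u‖ = ‖(u : Fin r → ℝ)‖ := rfl
        rw [h1, norm_smul, norm_inv, norm_norm, h2]
        have : ‖(u : Fin r → ℝ)‖ ≠ 0 := by rw [← h2]; exact hn.ne'
        field_simp
      have h2 : φ (‖u‖⁻¹ • u) = ‖u‖⁻¹ * φ u := hφhom _ (by positivity) u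
      have h3 : φ u₁ ≤ ‖u‖⁻¹ * φ u := by rw [← h2]; exact hu₁min hmem
      calc ε * ‖u‖ = φ u₁ * ‖u‖ := by rw [hε]
        _ ≤ (‖u‖⁻¹ * φ u) * ‖u‖ := by nlinarith
        _ = φ u := by
          rw [mul_comm (‖u‖⁻¹) (φ u), mul_assoc, inv_mul_cancel₀ hn.ne', mul_one]
  -- the function to minimize
  set g : (↥V) → ℝ := fun u => ∑ j ∈ J, Real.exp (∑ i, b j i * (u : Fin r → ℝ) i) with hg
  have hgcont : Continuous g :=
    continuous_finset_sum _ fun j _ => Real.continuous_exp.comp (hdotcont j)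
  have hglb : ∀ u : ↥V, ε * ‖u‖ ≤ g u := by
    intro u
    refine le_trans (hcoer u) (Finset.sum_le_sum fun j _ => ?_)
    exact max_le (by linarith [Real.add_one_le_exp (∑ i, b j i * (u : Fin r → ℝ) i)])
      (Real.exp_pos _).le
  have hgtendsto : Filter.Tendsto g (Filter.cocompact ↥V) Filter.atTop := by
    apply Filter.tendsto_atTop_mono hglb
    exact (tendsto_norm_cocompact_atTop.const_mul_atTop hεpos)
  obtain ⟨u₀, hu₀⟩ := hgcont.exists_forall_le hgtendsto
  -- first-order condition
  have hcrit : ∀ v : ↥V, (∑ j ∈ J,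
      Real.exp (∑ i, b j i * (u₀ : Fin r → ℝ) i) * (∑ i, b j i * (v : Fin r → ℝ) i)) = 0 := by
    intro v
    have heq : (fun ε : ℝ => g (u₀ + ε • v)) = fun ε : ℝ => ∑ j ∈ J,
        Real.exp ((∑ i, b j i * (u₀ : Fin r → ℝ) i)
          + ε * (∑ i, b j i * (v : Fin r → ℝ) i)) := by
      funext ε
      rw [hg]
      refine Finset.sum_congr rfl fun j _ => ?_
      congr 1
      rw [Finset.mul_sum, ← Finset.sum_add_distrib]
      refine Finset.sum_congr rfl fun i _ => ?_
      have : ((u₀ + ε • v : ↥V) : Fin r → ℝ) i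
          = (u₀ : Fin r → ℝ) i + ε * (v : Fin r → ℝ) i := rfl
      rw [this]; ring
    have hd : HasDerivAt (fun ε : ℝ => g (u₀ + ε • v)) (∑ j ∈ J,
        Real.exp (∑ i, b j i * (u₀ : Fin r → ℝ) i) * (∑ i, b j i * (v : Fin r → ℝ) i)) 0 := by
      rw [heq]
      exact hasDerivAt_expsum J _ _
    have hmin : IsLocalMin (fun ε : ℝ => g (u₀ + ε • v)) 0 := by
      apply Filter.Eventually.of_forall
      intro ε
      have : g u₀ ≤ g (u₀ + ε • v) := hu₀ _
      simpa using this
    have := hmin.deriv_eq_zero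
    rwa [hd.deriv] at this
  -- conclude
  set W : Fin r → ℝ := fun i => ∑ j ∈ J, Real.exp (∑ i', b j i' * (u₀ : Fin r → ℝ) i') * b j i
    with hW
  have hWi : ∀ i, W i = ∑ j ∈ J, Real.exp (∑ i', b j i' * (u₀ : Fin r → ℝ) i') * b j i :=
    fun i => rfl
  have hWV : W ∈ V := by
    have hWsum : W = ∑ j ∈ J, (Real.exp (∑ i', b j i' * (u₀ : Fin r → ℝ) i')) • b j := by
      funext i
      rw [hWi i, Finset.sum_apply]
      exact Finset.sum_congr rfl fun j _ => rfl
    rw [hWsum]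
    exact Submodule.sum_smul_mem V _ hbV
  have hWzero : W = 0 := by
    have hdotW : (∑ i, W i * W i) = 0 := by
      calc ∑ i, W i * W i
          = ∑ i, ∑ j ∈ J, (Real.exp (∑ i', b j i' * (u₀ : Fin r → ℝ) i') * b j i) * W i := by
            refine Finset.sum_congr rfl fun i _ => ?_
            rw [← Finset.sum_mul, ← hWi i]
        _ = ∑ j ∈ J, ∑ i, (Real.exp (∑ i', b j i' * (u₀ : Fin r → ℝ) i') * b j i) * W i :=
            Finset.sum_comm
        _ = ∑ j ∈ J, Real.exp (∑ i', b j i' * (u₀ : Fin r → ℝ) i') * ∑ i, b j i * W i := by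
            refine Finset.sum_congr rfl fun j _ => ?_
            rw [Finset.mul_sum]
            refine Finset.sum_congr rfl fun i _ => ?_
            ring
        _ = 0 := by simpa using hcrit ⟨W, hWV⟩
    exact dot_self_zero W hdotW
  exact ⟨(u₀ : Fin r → ℝ), fun i => congrFun hWzero i⟩

theorem exp_zpow (s : ℝ) (m : ℤ) : (Real.exp s) ^ m = Real.exp (m * s) := by
  rw [← Real.rpow_intCast (Real.exp s) m, ← Real.exp_mul, mul_comm]

noncomputable def expUnit (y : ℝ) : ℂˣ :=
  Units.mk0 ((Real.exp y : ℝ) : ℂ) (by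
    simpa using (Real.exp_pos y).ne')

theorem expUnit_coe (y : ℝ) : ((expUnit y : ℂˣ) : ℂ) = ((Real.exp y : ℝ) : ℂ) := rfl

def torusOrbit (q r : ℕ) (a : Fin (q + 1) → Fin r → ℤ) (J : Finset (Fin (q + 1))) :
    Set (Fin (q + 1) → ℂ) :=
  {z | ∃ (c : ℂˣ) (t : Fin r → ℂˣ),
    z = fun j => if j ∈ J then (c : ℂ) * ∏ i, (t i : ℂ) ^ (-(a j i)) else 0}

theorem torusOrbit_degen {q r : ℕ} (a : Fin (q + 1) → Fin r → ℤ)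
    (J J' : Finset (Fin (q + 1))) (hsub : J' ⊆ J) (v : Fin r → ℝ) (ρ : ℝ)
    (heq : ∀ j ∈ J', (∑ i, v i * (a j i : ℝ)) = ρ)
    (hlt : ∀ j ∈ J, j ∉ J' → ρ < ∑ i, v i * (a j i : ℝ)) :
    torusOrbit q r a J' ⊆ closure (torusOrbit q r a J) := by
  rintro z ⟨c, t, rfl⟩
  set w : Fin (q + 1) → ℂ := fun j => (c : ℂ) * ∏ i, (t i : ℂ) ^ (-(a j i)) with hw
  set zT : ℕ → (Fin (q + 1) → ℂ) := fun T j =>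
    if j ∈ J then ((Real.exp ((T : ℝ) * (ρ - ∑ i, v i * (a j i : ℝ))) : ℝ) : ℂ) * w j else 0
    with hzT
  apply mem_closure_of_tendsto (f := zT) (b := Filter.atTop)
  · -- tendsto
    rw [tendsto_pi_nhds]
    intro j
    by_cases hjJ' : j ∈ J'
    · have hjJ : j ∈ J := hsub hjJ'
      have hδ : ρ - (∑ i, v i * (a j i : ℝ)) = 0 := by rw [heq j hjJ']; ring
      have : ∀ T : ℕ, zT T j = w j := by
        intro T
        simp only [hzT, hjJ, if_pos, hδ, mul_zero, Real.exp_zero, Complex.ofReal_one, one_mul]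
      rw [show (if j ∈ J' then (c : ℂ) * ∏ i, (t i : ℂ) ^ (-(a j i)) else 0) = w j from by
        rw [if_pos hjJ']]
      simp only [this]
      exact tendsto_const_nhds
    · rw [if_neg hjJ']
      by_cases hjJ : j ∈ J
      · have hδ : ρ - (∑ i, v i * (a j i : ℝ)) < 0 := by
          have := hlt j hjJ hjJ'
          linarith
        have hre : Filter.Tendsto (fun T : ℕ => Real.exp ((T : ℝ) * (ρ - ∑ i, v i * (a j i : ℝ))))
            Filter.atTop (nhds 0) := by
          apply Real.tendsto_exp_atBot.comp
          exact Filter.Tendsto.atTop_mul_const_of_neg hδ tendsto_natCast_atTop_atTop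
        have hcast : Filter.Tendsto (fun T : ℕ =>
            ((Real.exp ((T : ℝ) * (ρ - ∑ i, v i * (a j i : ℝ))) : ℝ) : ℂ))
            Filter.atTop (nhds 0) := by
          have h2 := (Complex.continuous_ofReal.tendsto 0).comp hre
          rw [Complex.ofReal_zero] at h2
          exact h2
        have := hcast.mul_const (w j)
        rw [zero_mul] at this
        refine this.congr fun T => ?_
        simp only [hzT, hjJ, if_pos]
      · have : ∀ T : ℕ, zT T j = 0 := fun T => by simp only [hzT, hjJ, if_neg, ite_false]
        simp only [this]
        exact tendsto_const_nhds
  · -- eventually in the set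
    apply Filter.Eventually.of_forall
    intro T
    refine ⟨c * expUnit ((T : ℝ) * ρ), fun i => t i * expUnit ((T : ℝ) * v i), ?_⟩
    funext j
    by_cases hjJ : j ∈ J
    · rw [show zT T j = ((Real.exp ((T : ℝ) * (ρ - ∑ i, v i * (a j i : ℝ))) : ℝ) : ℂ) * w j
        from by rw [hzT]; simp only [hjJ, if_pos]]
      rw [if_pos hjJ, show w j = (c:ℂ) * ∏ i, (t i : ℂ) ^ (-(a j i)) from rfl]
      have hprod : ∀ i : Fin r, ((t i * expUnit ((T : ℝ) * v i) : ℂˣ) : ℂ) ^ (-(a j i))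
          = (t i : ℂ) ^ (-(a j i)) *
            ((Real.exp (-(a j i) * ((T : ℝ) * v i)) : ℝ) : ℂ) := by
        intro i
        rw [Units.val_mul, mul_zpow, expUnit_coe, ← Complex.ofReal_zpow, exp_zpow]
        norm_num
      rw [Finset.prod_congr rfl fun i _ => hprod i, Finset.prod_mul_distrib,
        ← Complex.ofReal_prod, ← Real.exp_sum, Units.val_mul, expUnit_coe]
      have hexp : Real.exp ((T:ℝ) * (ρ - ∑ i, v i * (a j i : ℝ)))
          = Real.exp ((T:ℝ) * ρ) * Real.exp (∑ i, -((a j i : ℝ)) * ((T:ℝ) * v i)) := by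
        rw [← Real.exp_add]
        congr 1
        have h1 : (∑ i, -((a j i:ℝ)) * ((T:ℝ) * v i))
            = -((T:ℝ) * ∑ i, v i * (a j i : ℝ)) := by
          rw [Finset.mul_sum, ← Finset.sum_neg_distrib]
          exact Finset.sum_congr rfl fun i _ => by ring
        rw [h1]
        ring
      rw [hexp, Complex.ofReal_mul]
      ring
    · rw [show zT T j = 0 from by rw [hzT]; simp only [hjJ, if_neg, ite_false]]
      rw [if_neg hjJ]

theorem main_surj {q r : ℕ} (a : Fin (q+1) → Fin r → ℤ) (x : Fin r → ℝ) :
    ∀ (n : ℕ) (J : Finset (Fin (q+1))), J.card ≤ n → ∀ m : Fin (q+1) → ℕ,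
    (∀ j, j ∉ J → m j = 0) → 0 < ∑ j, m j →
    (∀ i, x i * (∑ j, (m j : ℝ)) = ∑ j, (m j : ℝ) * (a j i : ℝ)) →
    ∃ z ∈ closure (torusOrbit q r a J), z ≠ 0 ∧
      ∀ i, (∑ j, ‖z j‖^2 * (a j i : ℝ)) / (∑ j, ‖z j‖^2) = x i := by
  intro n
  induction n with
  | zero =>
    intro J hcard m hm hpos _
    exfalso
    have hJ : J = ∅ := Finset.card_eq_zero.1 (le_antisymm hcard (Nat.zero_le _))
    have h0 : ∀ j, m j = 0 := fun j => hm j (by simp [hJ])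
    simp [h0] at hpos
  | succ n ih =>
    intro J hcard m hm hpos hx
    classical
    obtain ⟨j₀, hj₀⟩ : ∃ j₀, m j₀ ≠ 0 := by
      by_contra h; push_neg at h; simp [h] at hpos
    have hj₀J : j₀ ∈ J := by by_contra h; exact hj₀ (hm j₀ h)
    by_cases hcond : ∀ v : Fin r → ℝ, (∀ j ∈ J, 0 ≤ ∑ i, ((a j i:ℝ) - x i) * v i) →
        ∀ j ∈ J, (∑ i, ((a j i:ℝ) - x i) * v i) = 0
    · -- interior case: exact orbit point
      obtain ⟨s, hs⟩ := exists_exp_critical (fun j i => (a j i : ℝ) - x i) J hcond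
      set E : Fin (q+1) → ℝ := fun j => Real.exp (∑ i, (a j i : ℝ) * s i) with hE
      set z : Fin (q+1) → ℂ := fun j =>
        if j ∈ J then ((Real.exp ((∑ i, (a j i : ℝ) * s i)/2) : ℝ) : ℂ) else 0 with hz
      have hzj : ∀ j, z j = if j ∈ J
          then ((Real.exp ((∑ i, (a j i : ℝ) * s i)/2) : ℝ) : ℂ) else 0 := fun j => rfl
      have hzmem : z ∈ torusOrbit q r a J := by
        refine ⟨1, fun i => expUnit (-(s i)/2), ?_⟩
        funext j
        rw [hzj j]
        by_cases hjJ : j ∈ J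
        · rw [if_pos hjJ, if_pos hjJ]
          have hpr : ∀ i : Fin r, ((expUnit (-(s i)/2) : ℂˣ) : ℂ) ^ (-(a j i))
              = ((Real.exp (((-(a j i) : ℤ):ℝ) * (-(s i)/2)) : ℝ) : ℂ) := by
            intro i
            rw [expUnit_coe, ← Complex.ofReal_zpow, exp_zpow]
          rw [Finset.prod_congr rfl fun i _ => hpr i, ← Complex.ofReal_prod, ← Real.exp_sum]
          rw [Units.val_one, one_mul]
          congr 2
          rw [Finset.sum_div]
          refine Finset.sum_congr rfl fun i _ => ?_
          push_cast
          ring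
        · rw [if_neg hjJ, if_neg hjJ]
      have hnorm : ∀ j, ‖z j‖^2 = if j ∈ J then E j else 0 := by
        intro j
        rw [hzj j]
        by_cases hjJ : j ∈ J
        · rw [if_pos hjJ, if_pos hjJ, Complex.norm_real, Real.norm_eq_abs,
            abs_of_pos (Real.exp_pos _), hE, sq, ← Real.exp_add]
          congr 1
          ring
        · rw [if_neg hjJ, if_neg hjJ]; simp
      have hdenom : (∑ j, ‖z j‖^2) = ∑ j ∈ J, E j := by
        simp only [hnorm]
        rw [Finset.sum_ite_mem, Finset.univ_inter]
      have hden_pos : 0 < ∑ j ∈ J, E j :=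
        Finset.sum_pos (fun j _ => Real.exp_pos _) ⟨j₀, hj₀J⟩
      refine ⟨z, subset_closure hzmem, ?_, ?_⟩
      · intro h0
        have h1 : z j₀ = 0 := by rw [h0]; rfl
        rw [hzj j₀, if_pos hj₀J] at h1
        rw [Complex.ofReal_eq_zero] at h1
        exact (Real.exp_pos _).ne' h1
      · intro i
        have hnum : (∑ j, ‖z j‖^2 * (a j i : ℝ)) = ∑ j ∈ J, E j * (a j i : ℝ) := by
          simp only [hnorm, ite_mul, zero_mul]
          rw [Finset.sum_ite_mem, Finset.univ_inter]
        have hone : Real.exp (∑ i', x i' * s i') * Real.exp (-(∑ i', x i' * s i')) = 1 := by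
          rw [← Real.exp_add]; simp
        have h2 : ∀ j, Real.exp (∑ i', ((a j i':ℝ) - x i') * s i')
            = E j * Real.exp (-(∑ i', x i' * s i')) := by
          intro j
          rw [hE, ← Real.exp_add]
          congr 1
          have h5 : (∑ i', ((a j i':ℝ) - x i') * s i')
              = ∑ i', ((a j i':ℝ) * s i' - x i' * s i') :=
            Finset.sum_congr rfl fun i' _ => by ring
          rw [h5, Finset.sum_sub_distrib]
          ring
        have h1 : (∑ j ∈ J, Real.exp (∑ i', ((a j i':ℝ) - x i') * s i')
            * ((a j i:ℝ) - x i)) = 0 := hs i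
        have hkey : (∑ j ∈ J, E j * ((a j i:ℝ) - x i)) = 0 := by
          have h3 : (∑ j ∈ J, E j * ((a j i:ℝ) - x i))
              = Real.exp (∑ i', x i' * s i') * ∑ j ∈ J,
                Real.exp (∑ i', ((a j i':ℝ) - x i') * s i') * ((a j i:ℝ) - x i) := by
            rw [Finset.mul_sum]
            refine Finset.sum_congr rfl fun j _ => ?_
            rw [h2 j]
            calc E j * ((a j i:ℝ) - x i)
                = (Real.exp (∑ i', x i' * s i') * Real.exp (-(∑ i', x i' * s i')))
                  * (E j * ((a j i:ℝ) - x i)) := by rw [hone, one_mul]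
              _ = Real.exp (∑ i', x i' * s i')
                  * (E j * Real.exp (-(∑ i', x i' * s i')) * ((a j i:ℝ) - x i)) := by ring
          rw [h3, h1, mul_zero]
        have hsplit : (∑ j ∈ J, E j * (a j i:ℝ)) = x i * ∑ j ∈ J, E j := by
          have h4 : (∑ j ∈ J, E j * ((a j i:ℝ) - x i))
              = (∑ j ∈ J, E j * (a j i:ℝ)) - x i * ∑ j ∈ J, E j := by
            rw [Finset.mul_sum, ← Finset.sum_sub_distrib]
            refine Finset.sum_congr rfl fun j _ => by ring
          rw [h4] at hkey
          linarith
        rw [hnum, hdenom, hsplit, mul_div_assoc, div_self hden_pos.ne', mul_one]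
    · -- boundary case: reduce to a smaller face
      push_neg at hcond
      obtain ⟨v, hv1, j₁, hj₁J, hj₁⟩ := hcond
      set S : Fin (q+1) → ℝ := fun j => ∑ i, ((a j i:ℝ) - x i) * v i with hS
      set J' : Finset (Fin (q+1)) := J.filter (fun j => S j = 0) with hJ'
      have hJ'sub : J' ⊆ J := Finset.filter_subset _ _
      have hj₁J' : j₁ ∉ J' := by
        rw [hJ', Finset.mem_filter]
        push_neg
        intro _
        exact hj₁
      have hssub : J' ⊂ J := (Finset.ssubset_iff_of_subset hJ'sub).2 ⟨j₁, hj₁J, hj₁J'⟩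
      have hcard' : J'.card ≤ n := by
        have := Finset.card_lt_card hssub
        omega
      have hsum0 : (∑ j, (m j : ℝ) * S j) = 0 := by
        have h1 : ∀ j, (m j : ℝ) * S j
            = ∑ i, ((m j:ℝ) * (a j i:ℝ) * v i - (m j:ℝ) * (x i * v i)) := by
          intro j
          rw [hS]
          show (m j : ℝ) * (∑ i, ((a j i:ℝ) - x i) * v i) = _
          rw [Finset.mul_sum]
          exact Finset.sum_congr rfl fun i _ => by ring
        rw [Finset.sum_congr rfl fun j _ => h1 j, Finset.sum_comm]
        refine Finset.sum_eq_zero fun i _ => ?_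
        rw [Finset.sum_sub_distrib]
        have e1 : (∑ j, (m j:ℝ) * (a j i:ℝ) * v i) = (∑ j, (m j:ℝ) * (a j i:ℝ)) * v i := by
          rw [Finset.sum_mul]
        have e2 : (∑ j, (m j:ℝ) * (x i * v i)) = (∑ j, (m j:ℝ)) * (x i * v i) := by
          rw [Finset.sum_mul]
        rw [e1, e2, ← hx i]
        ring
      have hterm : ∀ j, 0 ≤ (m j:ℝ) * S j := by
        intro j
        by_cases hj : j ∈ J
        · exact mul_nonneg (Nat.cast_nonneg _) (hv1 j hj)
        · rw [hm j hj]; simp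
      have hzero : ∀ j, (m j : ℝ) * S j = 0 := fun j =>
        (Finset.sum_eq_zero_iff_of_nonneg (fun j _ => hterm j)).1 hsum0 j (Finset.mem_univ j)
      have hm' : ∀ j, j ∉ J' → m j = 0 := by
        intro j hj
        by_cases hjJ : j ∈ J
        · have hSj : S j ≠ 0 := by
            intro h
            exact hj (by rw [hJ', Finset.mem_filter]; exact ⟨hjJ, h⟩)
          rcases mul_eq_zero.1 (hzero j) with h | h
          · exact_mod_cast h
          · exact absurd h hSj
        · exact hm j hjJ
      obtain ⟨z, hzcl, hzne, hzx⟩ := ih J' hcard' m hm' hpos hx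
      refine ⟨z, ?_, hzne, hzx⟩
      have hdeg : torusOrbit q r a J' ⊆ closure (torusOrbit q r a J) := by
        apply torusOrbit_degen a J J' hJ'sub v (∑ i, x i * v i)
        · intro j hj
          have hSj : S j = 0 :=
            (Finset.mem_filter.1 (show j ∈ J.filter (fun j => S j = 0) from hj)).2
          have : (∑ i, ((a j i:ℝ) - x i) * v i) = 0 := hSj
          have h6 : (∑ i, ((a j i:ℝ) - x i) * v i)
              = (∑ i, v i * (a j i:ℝ)) - ∑ i, x i * v i := by
            rw [← Finset.sum_sub_distrib]
            exact Finset.sum_congr rfl fun i _ => by ring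
          rw [h6] at this
          linarith
        · intro j hjJ hj
          have hSj : S j ≠ 0 := by
            intro h
            exact hj (by rw [hJ', Finset.mem_filter]; exact ⟨hjJ, h⟩)
          have hSge : 0 ≤ S j := hv1 j hjJ
          have hSgt : 0 < S j := hSge.lt_of_ne (Ne.symm hSj)
          have h6 : S j = (∑ i, v i * (a j i:ℝ)) - ∑ i, x i * v i := by
            rw [hS]
            show (∑ i, ((a j i:ℝ) - x i) * v i) = _
            rw [← Finset.sum_sub_distrib]
            exact Finset.sum_congr rfl fun i _ => by ring
          rw [h6] at hSgt
          linarith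
      exact closure_minimal hdeg isClosed_closure hzcl

theorem sum_smul_pair {q r : ℕ} (m : Fin (q+1) → ℕ) (g : Fin (q+1) → ℤ)
    (h : Fin (q+1) → Fin r → ℤ) :
    (∑ j, m j • ((g j, h j) : ℤ × (Fin r → ℤ)))
      = (∑ j, (m j : ℤ) * g j, fun i => ∑ j, (m j : ℤ) * h j i) := by
  refine Prod.ext ?_ ?_
  · rw [Prod.fst_sum]
    exact Finset.sum_congr rfl fun j _ => by
      show (m j • ((g j, h j) : ℤ × (Fin r → ℤ))).1 = (m j : ℤ) * g j
      rw [Prod.smul_fst]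
      exact nsmul_eq_mul _ _
  · rw [Prod.snd_sum]
    funext i
    rw [Finset.sum_apply]
    exact Finset.sum_congr rfl fun j _ => by
      show (m j • ((g j, h j) : ℤ × (Fin r → ℤ))).2 i = (m j : ℤ) * h j i
      rw [Prod.smul_snd]
      show m j • h j i = _
      exact nsmul_eq_mul _ _

set_option maxHeartbeats 1000000 in
/-- **`μ(W) ∩ ℚ^r = Δ_ℚ(S)`.**

With the torus action of weights `a j` on `ℂ^{q+1}`, the affine cone
`W̃ = closure { c • (t • 𝟙) }` and the moment map
`μ z i = (∑ j, ‖z j‖² * a j i) / (∑ j, ‖z j‖²)`, a point `x ∈ ℝ^r` with all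
coordinates rational lies in `μ(W̃ \ {0})` if and only if there are `n > 0` and
`b : Fin r → ℤ` with `(n, b)` in the additive submonoid `S` generated by the
`(1, a j)` and `x i = b i / n` for every `i`. -/
theorem moment_image_rational_points (q r : ℕ) (a : Fin (q + 1) → Fin r → ℤ)
    (x : Fin r → ℝ) (hx : ∀ i, ∃ p : ℚ, x i = (p : ℝ)) :
    (x ∈ (fun z : Fin (q + 1) → ℂ => fun i : Fin r =>
        (∑ j, ‖z j‖ ^ 2 * (a j i : ℝ)) / (∑ j, ‖z j‖ ^ 2)) ''
      (closure {z : Fin (q + 1) → ℂ | ∃ (c : ℂˣ) (t : Fin r → ℂˣ),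
          z = fun j => (c : ℂ) * ((∏ i, (t i : ℂ) ^ (-(a j i))) * 1)} \ {0}))
      ↔ ∃ n : ℤ, 0 < n ∧ ∃ b : Fin r → ℤ,
          (n, b) ∈ AddSubmonoid.closure
            (Set.range fun j : Fin (q + 1) => ((1 : ℤ), a j)) ∧
          ∀ i, x i = (b i : ℝ) / (n : ℝ) := by
  classical
  choose xq hxq using hx
  have hΩeq : {z : Fin (q + 1) → ℂ | ∃ (c : ℂˣ) (t : Fin r → ℂˣ),
      z = fun j => (c : ℂ) * ((∏ i, (t i : ℂ) ^ (-(a j i))) * 1)}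
      = torusOrbit q r a Finset.univ := by
    ext z
    constructor
    · rintro ⟨c, t, rfl⟩
      exact ⟨c, t, by funext j; rw [if_pos (Finset.mem_univ j)]; ring⟩
    · rintro ⟨c, t, rfl⟩
      exact ⟨c, t, by funext j; rw [if_pos (Finset.mem_univ j)]; ring⟩
  constructor
  · rintro ⟨z, ⟨hzc, hz0⟩, hμz⟩
    have hzne : z ≠ 0 := by simpa using hz0
    obtain ⟨js, hjs⟩ : ∃ j, z j ≠ 0 := by
      by_contra h; push_neg at h; exact hzne (funext h)
    have hDpos : 0 < ∑ j, ‖z j‖^2 := by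
      refine Finset.sum_pos' (fun j _ => by positivity) ⟨js, Finset.mem_univ _, ?_⟩
      exact pow_pos (norm_pos_iff.2 hjs) 2
    have hμ : ∀ i, x i = (∑ j, ‖z j‖^2 * (a j i:ℝ)) / (∑ j, ‖z j‖^2) :=
      fun i => (congrFun hμz i).symm
    set w : Fin (q+1) → ℝ := fun j => ‖z j‖^2 / (∑ j, ‖z j‖^2) with hw
    have hwnn : ∀ j, 0 ≤ w j := fun j => by positivity
    have hwsum : (∑ j, w j) = 1 := by
      rw [hw, ← Finset.sum_div, div_self hDpos.ne']
    have hxw : ∀ i, x i = ∑ j, w j * (a j i : ℝ) := by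
      intro i
      rw [hμ i, Finset.sum_div]
      exact Finset.sum_congr rfl fun j _ => by rw [hw]; ring
    set B : Fin (q+1) → Fin (r+1) → ℚ := fun j => Fin.cons 1 (fun i => (a j i : ℚ)) with hB
    set X : Fin (r+1) → ℚ := Fin.cons 1 xq with hX
    have hsol : ∀ i', (X i' : ℝ) = ∑ j, w j * (B j i' : ℝ) := by
      intro i'
      refine Fin.cases ?_ ?_ i'
      · have h1 : X 0 = 1 := by rw [hX]; exact Fin.cons_zero _ _
        have h2 : ∀ j, B j 0 = 1 := fun j => by rw [hB]; exact Fin.cons_zero _ _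
        rw [h1]
        simp only [h2, Rat.cast_one, mul_one]
        exact hwsum.symm
      · intro i
        have h1 : X i.succ = xq i := by rw [hX]; exact Fin.cons_succ _ _ _
        have h2 : ∀ j, B j i.succ = (a j i : ℚ) := fun j => by rw [hB]; exact Fin.cons_succ _ _ _
        rw [h1, ← hxq i, hxw i]
        refine Finset.sum_congr rfl fun j _ => ?_
        rw [h2 j]
        norm_num
    obtain ⟨u, hunn, huX⟩ := rat_sol_aux B X _ w le_rfl hwnn hsol
    set N : ℕ := ∏ j, (u j).den with hN
    have hNpos : 0 < N := Finset.prod_pos (fun j _ => (u j).pos)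
    have hcastm : ∀ j : Fin (q+1), ∃ mj : ℕ, ((mj : ℚ)) = u j * N := by
      intro j
      refine ⟨(u j).num.toNat * (N / (u j).den), ?_⟩
      have hdvd : (u j).den ∣ N := Finset.dvd_prod_of_mem _ (Finset.mem_univ j)
      have hnum0 : (0:ℤ) ≤ (u j).num := Rat.num_nonneg.2 (hunn j)
      have hden : ((u j).den : ℚ) ≠ 0 := Nat.cast_ne_zero.2 (u j).den_nz
      have e1 : (((u j).num.toNat : ℕ) : ℚ) = ((u j).num : ℚ) := by
        exact_mod_cast congrArg (Int.cast : ℤ → ℚ) (Int.toNat_of_nonneg hnum0)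
      rw [Nat.cast_mul, e1, Nat.cast_div hdvd hden]
      conv_rhs => rw [← Rat.num_div_den (u j)]
      ring
    choose mf hmf using hcastm
    have husum : (∑ j, u j) = 1 := by
      have h0 := huX 0
      have h1 : X 0 = 1 := by rw [hX]; exact Fin.cons_zero _ _
      have h2 : ∀ j, B j 0 = 1 := fun j => by rw [hB]; exact Fin.cons_zero _ _
      rw [h1] at h0
      simp only [h2, mul_one] at h0
      exact h0.symm
    have hmsum : ((∑ j, mf j : ℕ) : ℚ) = (N : ℚ) := by
      push_cast
      rw [Finset.sum_congr rfl fun j _ => hmf j, ← Finset.sum_mul, husum, one_mul]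
    have hmsumN : (∑ j, mf j) = N := by exact_mod_cast hmsum
    refine ⟨(N : ℤ), by exact_mod_cast hNpos, fun i => ∑ j, (mf j : ℤ) * a j i, ?_, ?_⟩
    · rw [mem_closure_range_iff_comb]
      refine ⟨mf, ?_⟩
      have := sum_smul_pair mf (fun _ => (1:ℤ)) a
      rw [this]
      refine Prod.ext ?_ rfl
      simp only [mul_one]
      rw [show (∑ j, (mf j : ℤ)) = ((∑ j, mf j : ℕ) : ℤ) by push_cast; ring, hmsumN]
    · intro i
      have hbQ : ((∑ j, (mf j : ℤ) * a j i : ℤ) : ℚ) = (N : ℚ) * xq i := by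
        push_cast
        have e4 : (∑ j, (mf j : ℚ) * (a j i : ℚ)) = ∑ j, u j * (N:ℚ) * (a j i : ℚ) :=
          Finset.sum_congr rfl fun j _ => by rw [hmf j]
        rw [e4]
        have h3 := huX i.succ
        have h1 : X i.succ = xq i := by rw [hX]; exact Fin.cons_succ _ _ _
        have h2 : ∀ j, B j i.succ = (a j i : ℚ) := fun j => by rw [hB]; exact Fin.cons_succ _ _ _
        rw [h1] at h3
        simp only [h2] at h3
        rw [show (∑ j, u j * (N:ℚ) * (a j i : ℚ)) = (N:ℚ) * ∑ j, u j * (a j i:ℚ) from by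
          rw [Finset.mul_sum]; exact Finset.sum_congr rfl fun j _ => by ring]
        rw [← h3]
      have hNne : ((N:ℚ):ℝ) ≠ 0 := by
        have : (0:ℚ) < (N:ℚ) := by exact_mod_cast hNpos
        positivity
      have := congrArg (Rat.cast : ℚ → ℝ) hbQ
      push_cast at this ⊢
      rw [hxq i]
      rw [eq_div_iff (by exact_mod_cast hNne)]
      linarith [this]
  · rintro ⟨n, hn, b, hmem, hxb⟩
    obtain ⟨m, hmEq⟩ := (mem_closure_range_iff_comb _ _).1 hmem
    rw [sum_smul_pair m (fun _ => (1:ℤ)) a] at hmEq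
    have hfst : n = ∑ j, (m j : ℤ) := by
      have := congrArg Prod.fst hmEq
      simpa using this
    have hsnd : ∀ i, b i = ∑ j, (m j : ℤ) * a j i := by
      intro i
      have := congrArg Prod.snd hmEq
      exact congrFun this i
    have hMpos : 0 < ∑ j, m j := by
      have h1 : (0:ℤ) < ∑ j, (m j:ℤ) := hfst ▸ hn
      have h2 : ((0:ℕ):ℤ) < ((∑ j, m j : ℕ) : ℤ) := by push_cast; linarith [h1]
      exact_mod_cast h2
    have hnR : ((n:ℤ):ℝ) = ∑ j, (m j : ℝ) := by
      rw [hfst]; push_cast; ring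
    have hxhyp : ∀ i, x i * (∑ j, (m j:ℝ)) = ∑ j, (m j:ℝ) * (a j i:ℝ) := by
      intro i
      have hxi := hxb i
      have hnne : ((n:ℤ):ℝ) ≠ 0 := by
        have : (0:ℤ) < n := hn
        exact_mod_cast this.ne'
      have hbi : ((b i : ℤ):ℝ) = ∑ j, (m j:ℝ) * (a j i:ℝ) := by
        rw [hsnd i]; push_cast; ring
      rw [← hnR, ← hbi, hxi, div_mul_cancel₀ _ hnne]
    obtain ⟨z, hzcl, hzne, hzx⟩ := main_surj a x (Finset.univ.card) Finset.univ le_rfl m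
      (fun j hj => absurd (Finset.mem_univ j) hj) hMpos hxhyp
    refine ⟨z, ⟨?_, ?_⟩, ?_⟩
    · rw [hΩeq]; exact hzcl
    · simpa using hzne
    · funext i; exact hzx i
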